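/- Let I ⊂ K[x_1,...,x_n] be a monomial ideal generated in degree d containing the pure powers x_1^d,...,x_{n-1}^d. If I has linear quotients with respect to the reverse lexicographical ordering of the minimal generators induced by every ordering of the variables, then I is polymatroidal. -/

import Mathlib

/-- A monomial in `n` variables, given by its exponent vector. -/
abbrev Mon (n : ℕ) := Fin n → ℕ

/-- Total degree of a monomial. -/
def mdeg {n : ℕ} (u : Mon n) : ℕ := ∑ i, u i

/-- The exponent vector of `x_j * (u / x_i)`. -/
def exch {n : ℕ} (u : Mon n) (i j : Fin n) : Mon n :=
  fun l => u l - (if l = i then 1 else 0) + (if l = j then 1 else 0)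

/-- Membership of the monomial `w` in the monomial ideal generated by the set `G`. -/
def memI {n : ℕ} (G : Set (Mon n)) (w : Mon n) : Prop :=
  ∃ u ∈ G, ∀ l, u l ≤ w l

/-- `G` (the set of minimal generators, all of one degree) is polymatroidal: the
exchange property holds. -/
def IsPolymatroidal {n : ℕ} (G : Set (Mon n)) : Prop :=
  ∀ u ∈ G, ∀ v ∈ G, ∀ i, v i < u i → ∃ j, u j < v j ∧ memI G (exch u i j)

/-- The (strict) lexicographic order on monomials of a common degree, induced by the
variable ordering `x_{σ 0} > x_{σ 1} > ⋯ > x_{σ (n-1)}`. -/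
def lexGT {n : ℕ} (σ : Fin n → Fin n) (u v : Mon n) : Prop :=
  ∃ i, v (σ i) < u (σ i) ∧ ∀ k, k < i → u (σ k) = v (σ k)

/-- `u ≥_lex v` with respect to the variable ordering given by `σ`. -/
def lexGE {n : ℕ} (σ : Fin n → Fin n) (u v : Mon n) : Prop :=
  u = v ∨ lexGT σ u v

/-- The (strict) reverse lexicographic order on monomials of a common degree, induced by
the variable ordering `x_{σ 0} > x_{σ 1} > ⋯ > x_{σ (n-1)}`. -/
def rlexGT {n : ℕ} (σ : Fin n → Fin n) (u v : Mon n) : Prop :=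
  ∃ i, u (σ i) < v (σ i) ∧ ∀ k, i < k → u (σ k) = v (σ k)

/-- `G` has linear quotients with respect to the order `gt`: for every `u ∈ G` the colon
ideal `(v ∈ G : gt v u) : u` is generated by variables, i.e. for every `v ∈ G` with
`gt v u` there is a variable `x_i` dividing `v : u` with `x_i·u` in the ideal generated
by the `gt`-larger generators. -/
def LinQuot {n : ℕ} (G : Set (Mon n)) (gt : Mon n → Mon n → Prop) : Prop :=
  ∀ u ∈ G, ∀ v ∈ G, gt v u →
    ∃ i, u i < v i ∧
      ∃ w ∈ G, gt w u ∧ ∀ l, w l ≤ u l + (if l = i then 1 else 0)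

/-- The forcing lemma: if `c ∈ G` exceeds `g ∈ G` only at the coordinate `a` and is
strictly smaller at `i`, then using the ordering that puts `a` second to last and `i`
last, the linear quotients property forces `x_a·(g/x_i) ∈ G`. -/
lemma lemF {n d : ℕ} {G : Set (Mon (n + 1))} (hdeg : ∀ u ∈ G, mdeg u = d)
    (hLQ : ∀ σ : Fin (n + 1) → Fin (n + 1), Function.Bijective σ →
      LinQuot G (rlexGT σ))
    {g c : Mon (n + 1)} (hg : g ∈ G) (hc : c ∈ G) {a i : Fin (n + 1)} (hai : a ≠ i)
    (hca : g a < c a) (hci : c i < g i) (hle : ∀ k, k ≠ a → c k ≤ g k) :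
    exch g i a ∈ G := by
  classical
  have hn : 0 < n := by
    rcases Nat.eq_zero_or_pos n with h | h
    · exfalso; apply hai; subst h
      have h1 := a.isLt; have h2 := i.isLt
      exact Fin.ext (by omega)
    · exact h
  have h1n : n - 1 < n + 1 := by omega
  set p0 : Fin (n + 1) := ⟨n - 1, h1n⟩ with hp0def
  set p1 : Fin (n + 1) := Fin.last n with hp1def
  have hp01 : p0 ≠ p1 := by
    intro h
    have := congrArg Fin.val h
    simp [hp0def, hp1def] at this
    omega
  set τ : Equiv.Perm (Fin (n + 1)) := Equiv.swap p1 i with hτ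
  set σE : Equiv.Perm (Fin (n + 1)) := τ.trans (Equiv.swap (τ p0) a) with hσ
  have hτp1 : τ p1 = i := Equiv.swap_apply_left _ _
  have hσp1 : σE p1 = i := by
    have h2 : τ p0 ≠ i := fun h => hp01 (τ.injective (h.trans hτp1.symm))
    simp only [hσ, Equiv.trans_apply]
    rw [hτp1]
    exact Equiv.swap_apply_of_ne_of_ne (Ne.symm h2) (Ne.symm hai)
  have hσp0 : σE p0 = a := by
    simp only [hσ, Equiv.trans_apply]
    exact Equiv.swap_apply_left _ _
  have hrlex : rlexGT (⇑σE) c g := by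
    refine ⟨p1, ?_, ?_⟩
    · rw [hσp1]; exact hci
    · intro k hk
      exfalso
      have : (k : ℕ) ≤ n := Nat.lt_succ_iff.mp k.isLt
      have h2 : (p1 : ℕ) < (k : ℕ) := hk
      simp [hp1def] at h2
      omega
  obtain ⟨j, hj, w, hwG, hwgt, hwle⟩ := hLQ (⇑σE) σE.bijective g hg c hc hrlex
  have hja : j = a := by
    by_contra h
    exact absurd hj (not_lt.mpr (hle j h))
  rw [hja] at hwle
  have hdg : ∑ l, g l = d := hdeg g hg
  have hdw : ∑ l, w l = d := hdeg w hwG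
  obtain ⟨p, hp, hafter⟩ := hwgt
  have hpp1 : p = p1 := by
    by_contra hne
    have hpv : (p : ℕ) < n := by
      have h1 := p.isLt
      have h2 : (p : ℕ) ≠ n := by
        intro h
        apply hne
        apply Fin.ext
        simp [hp1def, h]
      omega
    have hwa : w a ≤ g a := by
      by_cases hpp0 : p = p0
      · rw [hpp0, hσp0] at hp; exact le_of_lt hp
      · have hp0lt : p < p0 := by
          have h2 : (p : ℕ) ≠ n - 1 := by
            intro h
            apply hpp0
            apply Fin.ext
            simp [hp0def, h]
          have : ((p0 : Fin (n+1)) : ℕ) = n - 1 := by simp [hp0def]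
          exact Fin.lt_def.mpr (by omega)
        have := hafter p0 hp0lt
        rw [hσp0] at this
        omega
    have hwk : ∀ k, w k ≤ g k := by
      intro k
      by_cases hka : k = a
      · rw [hka]; exact hwa
      · have := hwle k
        simp [hka] at this
        exact this
    have : ∑ l, w l < ∑ l, g l :=
      Finset.sum_lt_sum (fun k _ => hwk k) ⟨σE p, Finset.mem_univ _, hp⟩
    omega
  rw [hpp1, hσp1] at hp
  have hle2 : ∀ l ∈ Finset.univ, w l + (if l = i then 1 else 0) ≤ g l + (if l = a then 1 else 0) := by
    intro l _
    by_cases hli : l = i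
    · subst hli
      simp [Ne.symm hai]
      omega
    · have := hwle l
      simp [hli]
      exact this
  have hsum_eq : ∑ l, (w l + (if l = i then 1 else 0)) = ∑ l, (g l + (if l = a then 1 else 0)) := by
    rw [Finset.sum_add_distrib, Finset.sum_add_distrib]
    simp [Finset.sum_ite_eq', hdg, hdw]
  have hkey := (Finset.sum_eq_sum_iff_of_le hle2).mp hsum_eq
  have hw_eq : exch g i a = w := by
    funext l
    have hk := hkey l (Finset.mem_univ l)
    by_cases hli : l = i
    · subst hli
      simp [exch, Ne.symm hai] at hk ⊢
      omega
    · by_cases hla : l = a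
      · subst hla
        simp [exch, hli] at hk ⊢
        omega
      · simp [exch, hli, hla] at hk ⊢
        omega
  rw [hw_eq]; exact hwG

/-- Every monomial of degree `d` with last coordinate `0` belongs to `G`. -/
lemma fact3 {n d : ℕ} {G : Set (Mon (n + 1))} (hdeg : ∀ u ∈ G, mdeg u = d)
    (hpure : ∀ i : Fin (n + 1), i ≠ Fin.last n →
      (fun l => if l = i then d else 0) ∈ G)
    (hLQ : ∀ σ : Fin (n + 1) → Fin (n + 1), Function.Bijective σ →
      LinQuot G (rlexGT σ)) :
    ∀ (N : ℕ) (g m : Mon (n + 1)), g ∈ G → g (Fin.last n) = 0 →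
      mdeg m = d → m (Fin.last n) = 0 → (∑ k, (m k - g k)) ≤ N → m ∈ G := by
  classical
  intro N
  induction N with
  | zero =>
    intro g m hg hgL hmd hmL hsum
    have hle : ∀ k, m k ≤ g k := by
      intro k
      have h0 : ∑ k, (m k - g k) = 0 := Nat.le_zero.mp hsum
      have := (Finset.sum_eq_zero_iff).mp h0 k (Finset.mem_univ k)
      omega
    have hge : ∑ k, m k = ∑ k, g k := by
      have h1 : ∑ k, g k = d := hdeg g hg
      have h2 : ∑ k, m k = d := hmd
      omega
    have := (Finset.sum_eq_sum_iff_of_le (fun k _ => hle k)).mp hge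
    have hmg : m = g := funext fun k => this k (Finset.mem_univ k)
    rwa [hmg]
  | succ N ih =>
    intro g m hg hgL hmd hmL hsum
    by_cases hall : ∀ k, m k ≤ g k
    · have hge : ∑ k, m k = ∑ k, g k := by
        have h1 : ∑ k, g k = d := hdeg g hg
        have h2 : ∑ k, m k = d := hmd
        omega
      have := (Finset.sum_eq_sum_iff_of_le (fun k _ => hall k)).mp hge
      have hmg : m = g := funext fun k => this k (Finset.mem_univ k)
      rwa [hmg]
    · push_neg at hall
      obtain ⟨s, hs⟩ := hall
      have hex : ∃ a, m a < g a := by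
        by_contra h
        push_neg at h
        have : ∑ k, g k < ∑ k, m k :=
          Finset.sum_lt_sum (fun k _ => h k) ⟨s, Finset.mem_univ _, hs⟩
        have h1 : ∑ k, g k = d := hdeg g hg
        have h2 : ∑ k, m k = d := hmd
        omega
      obtain ⟨a, ha⟩ := hex
      have hsL : s ≠ Fin.last n := by intro h; rw [h, hmL] at hs; omega
      have haL : a ≠ Fin.last n := by intro h; rw [h, hgL] at ha; omega
      have has : s ≠ a := by intro h; rw [h] at hs; omega
      have hgsd : g s < d := by
        have h3 : ∑ k, m k = d := hmd
        have h4 : m s ≤ ∑ k, m k :=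
          Finset.single_le_sum (fun k _ => Nat.zero_le _) (Finset.mem_univ s)
        omega
      have hPs : (fun l => if l = s then d else 0) ∈ G := hpure s hsL
      have hg' : exch g a s ∈ G := by
        refine lemF hdeg hLQ hg hPs has ?_ ?_ ?_
        · simp only [if_pos rfl]; exact hgsd
        · simp only [if_neg (Ne.symm has)]; omega
        · intro k hk; simp [hk]
      have hg'L : (exch g a s) (Fin.last n) = 0 := by
        simp [exch, Ne.symm haL, Ne.symm hsL, hgL]
      have hstep : ∑ k, (m k - exch g a s k) ≤ N := by
        have hpt : ∀ k ∈ Finset.univ.erase s, m k - exch g a s k ≤ m k - g k := by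
          intro k hk
          have hks : k ≠ s := Finset.ne_of_mem_erase hk
          by_cases hka : k = a
          · subst hka
            simp [exch, hks]
            omega
          · simp [exch, hks, hka]
        have hs' : m s - exch g a s s + 1 ≤ m s - g s := by
          simp [exch, has]
          omega
        have e1 : ∑ k, (m k - exch g a s k)
            = (m s - exch g a s s) + ∑ k ∈ Finset.univ.erase s, (m k - exch g a s k) :=
          (Finset.add_sum_erase _ _ (Finset.mem_univ s)).symm
        have e2 : ∑ k, (m k - g k)
            = (m s - g s) + ∑ k ∈ Finset.univ.erase s, (m k - g k) :=
          (Finset.add_sum_erase _ _ (Finset.mem_univ s)).symm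
        have e3 := Finset.sum_le_sum hpt
        omega
      exact ih (exch g a s) m hg' hg'L hmd hmL hstep

theorem stmt_5 {n d : ℕ} (G : Set (Mon (n + 1))) (hdeg : ∀ u ∈ G, mdeg u = d)
    (hpure : ∀ i : Fin (n + 1), i ≠ Fin.last n →
      (fun l => if l = i then d else 0) ∈ G)
    (hLQ : ∀ σ : Fin (n + 1) → Fin (n + 1), Function.Bijective σ →
      LinQuot G (rlexGT σ)) :
    IsPolymatroidal G := by
  classical
  intro u hu v hv i hvi
  have hud : ∑ k, u k = d := hdeg u hu
  have hvd : ∑ k, v k = d := hdeg v hv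
  have hex : ∃ a, u a < v a := by
    by_contra h
    push_neg at h
    have : ∑ k, v k < ∑ k, u k :=
      Finset.sum_lt_sum (fun k _ => h k) ⟨i, Finset.mem_univ _, hvi⟩
    omega
  by_cases hcase : ∃ a, a ≠ Fin.last n ∧ u a < v a
  · obtain ⟨a, haL, hav⟩ := hcase
    have hai : a ≠ i := by intro h; rw [h] at hav; omega
    set T : Finset (Fin (n + 1)) := {a, i, Fin.last n} with hT
    have haT : a ∈ T := by simp [hT]
    have hiT : i ∈ T := by simp [hT]
    have hLT : Fin.last n ∈ T := by simp [hT]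
    set c : Mon (n + 1) :=
      fun k => if k = a then u a + ∑ x ∈ T.erase a, u x else if k ∈ T then 0 else u k with hc
    have hcd : mdeg c = d := by
      have h2 : ∑ k ∈ T.erase a, c k = 0 := Finset.sum_eq_zero (fun k hk => by
        have hka : k ≠ a := Finset.ne_of_mem_erase hk
        have hkT : k ∈ T := Finset.mem_of_mem_erase hk
        simp [hc, hka, hkT])
      have h3 : c a = u a + ∑ x ∈ T.erase a, u x := by simp [hc]
      have e1 : ∑ k ∈ T, c k = c a + ∑ k ∈ T.erase a, c k :=
        (Finset.add_sum_erase _ _ haT).symm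
      have e2 : ∑ k ∈ T, u k = u a + ∑ k ∈ T.erase a, u k :=
        (Finset.add_sum_erase _ _ haT).symm
      have h4 : ∑ k ∈ Tᶜ, c k = ∑ k ∈ Tᶜ, u k := Finset.sum_congr rfl (fun k hk => by
        have hkT : k ∉ T := by simpa using hk
        have hka : k ≠ a := fun h => hkT (h ▸ haT)
        simp [hc, hka, hkT])
      have h5 := Finset.sum_add_sum_compl T c
      have h6 := Finset.sum_add_sum_compl T u
      show ∑ k, c k = d
      omega
    have hcL : c (Fin.last n) = 0 := by
      simp [hc, Ne.symm haL, hLT]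
    have hcG : c ∈ G := by
      refine fact3 hdeg hpure hLQ d (fun l => if l = a then d else 0) c
        (hpure a haL) ?_ hcd hcL ?_
      · simp [Ne.symm haL]
      · have h7 : ∑ k, (c k - (fun l => if l = a then d else 0) k) ≤ ∑ k, c k :=
          Finset.sum_le_sum (fun k _ => Nat.sub_le _ _)
        have h8 : ∑ k, c k = d := hcd
        beta_reduce at h7
        omega
    have hca : u a < c a := by
      have h8 : u i ≤ ∑ x ∈ T.erase a, u x :=
        Finset.single_le_sum (fun k _ => Nat.zero_le _)
          (Finset.mem_erase.mpr ⟨Ne.symm hai, hiT⟩)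
      have h9 : c a = u a + ∑ x ∈ T.erase a, u x := by simp [hc]
      omega
    have hci : c i < u i := by
      have h9 : c i = 0 := by simp [hc, Ne.symm hai, hiT]
      omega
    have hlec : ∀ k, k ≠ a → c k ≤ u k := by
      intro k hk
      by_cases hkT : k ∈ T
      · simp [hc, hk, hkT]
      · simp [hc, hk, hkT]
    have hfin := lemF hdeg hLQ hu hcG hai hca hci hlec
    exact ⟨a, hav, exch u i a, hfin, fun l => le_refl _⟩
  · push_neg at hcase
    obtain ⟨a, hav⟩ := hex
    have haL : a = Fin.last n := by
      by_contra h
      exact absurd hav (not_lt.mpr (hcase a h))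
    subst haL
    have hiL : Fin.last n ≠ i := by
      intro h; rw [h] at hav; omega
    have hfin := lemF hdeg hLQ hu hv hiL hav hvi (fun k hk => hcase k hk)
    exact ⟨Fin.last n, hav, exch u i (Fin.last n), hfin, fun l => le_refl _⟩
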